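/- Let K : (-∞, 0] → ℝ be continuous with K(r) ≤ 0 for all r ≤ 0, and let s₀ > 0. Let h_∞ : (-∞, 0] → ℝ be a twice continuously differentiable solution of h'' + Kh = 0 with h_∞(0) = 1 and 0 < h_∞(r) ≤ 1 for all r ≤ 0, and let h : [-s₀, 0] → ℝ be the twice continuously differentiable solution of h'' + Kh = 0 with h(-s₀) = 0 and h(0) = 1. Then |h_∞(r) − h(r)| ≤ -r/s₀ for all r ∈ [-s₀, 0]. -/

import Mathlib

open Set

/-- Maximum principle: if `w'' ≤ 0` wherever `w < 0` in the interior and `w ≥ 0` at the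
endpoints, then `w ≥ 0` on the whole interval. -/
lemma maxPrinciple_aux (a b : ℝ) (hab : a < b) (w w' w'' : ℝ → ℝ)
    (hw : ∀ r ∈ Icc a b, HasDerivWithinAt w (w' r) (Icc a b) r)
    (hw' : ∀ r ∈ Icc a b, HasDerivWithinAt w' (w'' r) (Icc a b) r)
    (hneg : ∀ r ∈ Ioo a b, w r < 0 → w'' r ≤ 0)
    (ha : 0 ≤ w a) (hb : 0 ≤ w b) :
    ∀ r ∈ Icc a b, 0 ≤ w r := by
  have hwc : ContinuousOn w (Icc a b) := fun x hx => (hw x hx).continuousWithinAt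
  have hwc' : ContinuousOn w' (Icc a b) := fun x hx => (hw' x hx).continuousWithinAt
  have hwD : ∀ x ∈ Ioo a b, HasDerivAt w (w' x) x := fun x hx =>
    (hw x (Ioo_subset_Icc_self hx)).hasDerivAt (Icc_mem_nhds hx.1 hx.2)
  have hwD' : ∀ x ∈ Ioo a b, HasDerivAt w' (w'' x) x := fun x hx =>
    (hw' x (Ioo_subset_Icc_self hx)).hasDerivAt (Icc_mem_nhds hx.1 hx.2)
  by_contra hcon
  push_neg at hcon
  obtain ⟨c, hc, hcneg⟩ := hcon
  have hca : a < c := lt_of_le_of_ne hc.1 (by rintro rfl; linarith)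
  have hcb : c < b := lt_of_le_of_ne hc.2 (by rintro rfl; linarith)
  -- sets of zeros to the left and right of c
  set S₁ : Set ℝ := Icc a c ∩ w ⁻¹' {0} with hS₁def
  set S₂ : Set ℝ := Icc c b ∩ w ⁻¹' {0} with hS₂def
  have hsub₁ : Icc a c ⊆ Icc a b := Icc_subset_Icc le_rfl hc.2
  have hsub₂ : Icc c b ⊆ Icc a b := Icc_subset_Icc hc.1 le_rfl
  have hS₁ne : S₁.Nonempty := by
    obtain ⟨y, hy, hy0⟩ := intermediate_value_Icc' hca.le (hwc.mono hsub₁)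
      (show (0:ℝ) ∈ Icc (w c) (w a) from ⟨hcneg.le, ha⟩)
    exact ⟨y, hy, hy0⟩
  have hS₂ne : S₂.Nonempty := by
    obtain ⟨y, hy, hy0⟩ := intermediate_value_Icc hcb.le (hwc.mono hsub₂)
      (show (0:ℝ) ∈ Icc (w c) (w b) from ⟨hcneg.le, hb⟩)
    exact ⟨y, hy, hy0⟩
  have hS₁cl : IsClosed S₁ :=
    (hwc.mono hsub₁).preimage_isClosed_of_isClosed isClosed_Icc isClosed_singleton
  have hS₂cl : IsClosed S₂ :=
    (hwc.mono hsub₂).preimage_isClosed_of_isClosed isClosed_Icc isClosed_singleton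
  have hS₁cpt : IsCompact S₁ := isCompact_Icc.of_isClosed_subset hS₁cl inter_subset_left
  have hS₂cpt : IsCompact S₂ := isCompact_Icc.of_isClosed_subset hS₂cl inter_subset_left
  set α := sSup S₁ with hαdef
  set β := sInf S₂ with hβdef
  have hαmem : α ∈ S₁ := hS₁cpt.sSup_mem hS₁ne
  have hβmem : β ∈ S₂ := hS₂cpt.sInf_mem hS₂ne
  have hα0 : w α = 0 := hαmem.2
  have hβ0 : w β = 0 := hβmem.2
  have hαc : α < c := lt_of_le_of_ne hαmem.1.2 (by intro he; rw [he] at hα0; linarith)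
  have hcβ : c < β := lt_of_le_of_ne hβmem.1.1 (by intro he; rw [← he] at hβ0; linarith)
  have haα : a ≤ α := hαmem.1.1
  have hβb : β ≤ b := hβmem.1.2
  -- w < 0 on (α, β)
  have hwneg : ∀ x ∈ Ioo α β, w x < 0 := by
    intro x hx
    by_contra hwx
    push_neg at hwx
    rcases le_or_gt x c with hxc | hxc
    · have hxc' : x < c := lt_of_le_of_ne hxc (by rintro rfl; linarith)
      obtain ⟨y, hy, hy0⟩ := intermediate_value_Icc' hxc'.le
        (hwc.mono (Icc_subset_Icc (by linarith [hx.1]) hc.2))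
        (show (0:ℝ) ∈ Icc (w c) (w x) from ⟨hcneg.le, hwx⟩)
      have hyS : y ∈ S₁ := ⟨⟨by linarith [hy.1, hx.1], hy.2⟩, hy0⟩
      have := le_csSup hS₁cpt.bddAbove hyS
      linarith [hy.1, hx.1]
    · obtain ⟨y, hy, hy0⟩ := intermediate_value_Icc hxc.le
        (hwc.mono (Icc_subset_Icc hc.1 (by linarith [hx.2])))
        (show (0:ℝ) ∈ Icc (w c) (w x) from ⟨hcneg.le, hwx⟩)
      have hyS : y ∈ S₂ := ⟨⟨by linarith [hy.1], by linarith [hy.2, hx.2]⟩, hy0⟩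
      have := csInf_le hS₂cpt.bddBelow hyS
      linarith [hy.2, hx.2]
  -- MVT on [α, c]
  have hIoo1 : Ioo α c ⊆ Ioo a b := Ioo_subset_Ioo haα (by linarith)
  obtain ⟨ξ₁, hξ₁, hξ₁eq⟩ := exists_hasDerivAt_eq_slope w w' hαc
    (hwc.mono (Icc_subset_Icc haα (by linarith)))
    (fun x hx => hwD x (hIoo1 hx))
  have hIoo2 : Ioo c β ⊆ Ioo a b := Ioo_subset_Ioo (by linarith) hβb
  obtain ⟨ξ₂, hξ₂, hξ₂eq⟩ := exists_hasDerivAt_eq_slope w w' hcβ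
    (hwc.mono (Icc_subset_Icc (by linarith) hβb))
    (fun x hx => hwD x (hIoo2 hx))
  have hξ₁neg : w' ξ₁ < 0 := by
    rw [hξ₁eq, hα0]
    apply div_neg_of_neg_of_pos <;> linarith
  have hξ₂pos : 0 < w' ξ₂ := by
    rw [hξ₂eq, hβ0]
    apply div_pos <;> linarith
  have hξ₁ξ₂ : ξ₁ < ξ₂ := by linarith [hξ₁.2, hξ₂.1]
  have hIoo3 : Ioo ξ₁ ξ₂ ⊆ Ioo a b :=
    Ioo_subset_Ioo (by linarith [hξ₁.1]) (by linarith [hξ₂.2])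
  obtain ⟨η, hη, hηeq⟩ := exists_hasDerivAt_eq_slope w' w'' hξ₁ξ₂
    (hwc'.mono (Icc_subset_Icc (by linarith [hξ₁.1]) (by linarith [hξ₂.2])))
    (fun x hx => hwD' x (hIoo3 hx))
  have hηpos : 0 < w'' η := by
    rw [hηeq]
    apply div_pos <;> linarith
  have hηmem : η ∈ Ioo α β := ⟨by linarith [hη.1, hξ₁.1], by linarith [hη.2, hξ₂.2]⟩
  have := hneg η (hIoo3 hη) (hwneg η hηmem)
  linarith

/-- Quantitative approximation of the bounded Jacobi solution `h_∞` by the solution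
`h` vanishing at `-s₀`: `|h_∞(r) - h(r)| ≤ -r/s₀` on `[-s₀, 0]`. -/
theorem stmt_10 (s₀ : ℝ) (hs₀ : 0 < s₀) (K hinf hinf' hinf'' h h' h'' : ℝ → ℝ)
    (hK : ContinuousOn K (Set.Iic 0))
    (hKneg : ∀ r : ℝ, r ≤ 0 → K r ≤ 0)
    (hhinf : ∀ r : ℝ, r ≤ 0 → HasDerivWithinAt hinf (hinf' r) (Set.Iic 0) r)
    (hhinf' : ∀ r : ℝ, r ≤ 0 → HasDerivWithinAt hinf' (hinf'' r) (Set.Iic 0) r)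
    (hhinf'' : ContinuousOn hinf'' (Set.Iic 0))
    (heqinf : ∀ r : ℝ, r ≤ 0 → hinf'' r + K r * hinf r = 0)
    (hinf0 : hinf 0 = 1)
    (hinfbd : ∀ r : ℝ, r ≤ 0 → 0 < hinf r ∧ hinf r ≤ 1)
    (hh : ∀ r ∈ Set.Icc (-s₀) 0, HasDerivWithinAt h (h' r) (Set.Icc (-s₀) 0) r)
    (hh' : ∀ r ∈ Set.Icc (-s₀) 0, HasDerivWithinAt h' (h'' r) (Set.Icc (-s₀) 0) r)
    (hh'' : ContinuousOn h'' (Set.Icc (-s₀) 0))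
    (heq : ∀ r ∈ Set.Icc (-s₀) 0, h'' r + K r * h r = 0)
    (hend : h (-s₀) = 0) (h0 : h 0 = 1) :
    ∀ r ∈ Set.Icc (-s₀) 0, |hinf r - h r| ≤ -r / s₀ := by
  have hsub : Set.Icc (-s₀) 0 ⊆ Set.Iic 0 := fun x hx => hx.2
  have hab : (-s₀) < 0 := by linarith
  set C := hinf (-s₀) with hCdef
  obtain ⟨hCpos, hCle⟩ := hinfbd (-s₀) (by linarith)
  -- derivative of the linear part
  have hlin : ∀ r ∈ Set.Icc (-s₀) 0,
      HasDerivWithinAt (fun r : ℝ => -r / s₀ * C) (-1 / s₀ * C) (Set.Icc (-s₀) 0) r := by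
    intro r hr
    exact (((hasDerivWithinAt_id r _).neg.div_const s₀).mul_const C)
  have hgD : ∀ r ∈ Set.Icc (-s₀) 0,
      HasDerivWithinAt (fun r => hinf r - h r) (hinf' r - h' r) (Set.Icc (-s₀) 0) r :=
    fun r hr => ((hhinf r hr.2).mono hsub).sub (hh r hr)
  have hgD' : ∀ r ∈ Set.Icc (-s₀) 0,
      HasDerivWithinAt (fun r => hinf' r - h' r) (hinf'' r - h'' r) (Set.Icc (-s₀) 0) r :=
    fun r hr => ((hhinf' r hr.2).mono hsub).sub (hh' r hr)
  -- first barrier: w₁ = ℓ - g ≥ 0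
  have hw₁ : ∀ r ∈ Set.Icc (-s₀) 0, 0 ≤ -r / s₀ * C - (hinf r - h r) := by
    apply maxPrinciple_aux (-s₀) 0 hab _ (fun r => -1 / s₀ * C - (hinf' r - h' r))
      (fun r => -(hinf'' r - h'' r))
    · exact fun r hr => (hlin r hr).sub (hgD r hr)
    · exact fun r hr => (hgD' r hr).const_sub _
    · intro r hr hwr
      have hr' : r ∈ Set.Icc (-s₀) 0 := Set.Ioo_subset_Icc_self hr
      have e1 := heqinf r hr'.2
      have e2 := heq r hr'
      have hg : 0 < hinf r - h r := by
        have hl : 0 < -r / s₀ * C := by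
          apply mul_pos _ hCpos
          apply div_pos _ hs₀
          linarith [hr.2]
        linarith
      have hKr := hKneg r hr'.2
      nlinarith
    · show (0:ℝ) ≤ -(-s₀) / s₀ * C - (hinf (-s₀) - h (-s₀))
      rw [hend]
      have hd : -(-s₀) / s₀ = 1 := by field_simp
      rw [hd]; simp; exact le_rfl
    · show (0:ℝ) ≤ -(0:ℝ) / s₀ * C - (hinf 0 - h 0)
      rw [hinf0, h0]; simp
  -- second barrier: w₂ = ℓ + g ≥ 0
  have hw₂ : ∀ r ∈ Set.Icc (-s₀) 0, 0 ≤ -r / s₀ * C + (hinf r - h r) := by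
    apply maxPrinciple_aux (-s₀) 0 hab _ (fun r => -1 / s₀ * C + (hinf' r - h' r))
      (fun r => hinf'' r - h'' r)
    · exact fun r hr => (hlin r hr).add (hgD r hr)
    · exact fun r hr => (hgD' r hr).const_add _
    · intro r hr hwr
      have hr' : r ∈ Set.Icc (-s₀) 0 := Set.Ioo_subset_Icc_self hr
      have e1 := heqinf r hr'.2
      have e2 := heq r hr'
      have hg : hinf r - h r < 0 := by
        have hl : 0 < -r / s₀ * C := by
          apply mul_pos _ hCpos
          apply div_pos _ hs₀
          linarith [hr.2]
        linarith
      have hKr := hKneg r hr'.2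
      nlinarith
    · show (0:ℝ) ≤ -(-s₀) / s₀ * C + (hinf (-s₀) - h (-s₀))
      rw [hend]
      have hd : -(-s₀) / s₀ = 1 := by field_simp
      rw [hd]
      show (0:ℝ) ≤ 1 * C + (C - 0)
      linarith
    · show (0:ℝ) ≤ -(0:ℝ) / s₀ * C + (hinf 0 - h 0)
      rw [hinf0, h0]; simp
  intro r hr
  have h₁ := hw₁ r hr
  have h₂ := hw₂ r hr
  have hrpos : 0 ≤ -r / s₀ := div_nonneg (by linarith [hr.2]) hs₀.le
  have hle : -r / s₀ * C ≤ -r / s₀ := by nlinarith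
  rw [abs_le]
  constructor <;> linarith
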